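/- Let I = (F_t)_{t∈[0,1]} be an identity isotopy on the complex plane ℂ, and let z₁, z₂ be two distinct fixed points of F₁. Then there exists an identity isotopy I' from id_ℂ to F₁ that fixes both z₁ and z₂ at all times. -/

import Mathlib

/-- An identity isotopy on a topological space: a jointly continuous family of
homeomorphisms starting at the identity. -/
def IsIdentityIsotopy {X : Type*} [TopologicalSpace X] (F : unitInterval → X → X) : Prop :=
  Continuous (fun p : unitInterval × X => F p.1 p.2) ∧
  (∀ t, ∃ h : X ≃ₜ X, F t = h) ∧ F 0 = id

/-- Given an identity isotopy `I = (F_t)` on the plane `ℂ` and two distinct fixed points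
`z₁, z₂` of the time-one map `F₁`, there exists an identity isotopy `I'` from `id_ℂ` to
`F₁` fixing both `z₁` and `z₂` at all times. -/
theorem exists_isotopy_fixing_two_points
    (F : unitInterval → ℂ → ℂ) (hF : IsIdentityIsotopy F)
    (z₁ z₂ : ℂ) (h12 : z₁ ≠ z₂)
    (hfix₁ : F 1 z₁ = z₁) (hfix₂ : F 1 z₂ = z₂) :
    ∃ F' : unitInterval → ℂ → ℂ,
      IsIdentityIsotopy F' ∧ F' 1 = F 1 ∧
      ∀ t, F' t z₁ = z₁ ∧ F' t z₂ = z₂ := by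
  obtain ⟨hcont, hhomeo, hzero⟩ := hF
  have hz : z₂ - z₁ ≠ 0 := sub_ne_zero.mpr h12.symm
  have hc : ∀ t, F t z₂ - F t z₁ ≠ 0 := by
    intro t h
    obtain ⟨h', hh⟩ := hhomeo t
    have h2 : F t z₂ = F t z₁ := sub_eq_zero.mp h
    rw [hh] at h2
    exact h12 (h'.injective h2).symm
  -- the corrected isotopy
  refine ⟨fun t z => z₁ + (F t z - F t z₁) * ((z₂ - z₁) / (F t z₂ - F t z₁)), ?_, ?_, ?_⟩
  · refine ⟨?_, ?_, ?_⟩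
    · have h1 : Continuous fun t : unitInterval => F t z₁ :=
        hcont.comp (continuous_id.prodMk continuous_const)
      have h2 : Continuous fun t : unitInterval => F t z₂ :=
        hcont.comp (continuous_id.prodMk continuous_const)
      exact continuous_const.add ((hcont.sub (h1.comp continuous_fst)).mul
        (((continuous_const.sub continuous_const).div
          ((h2.sub h1).comp continuous_fst) (fun p => hc p.1))))
    · intro t
      obtain ⟨h', hh⟩ := hhomeo t
      set k : ℂ := (z₂ - z₁) / (F t z₂ - F t z₁) with hk
      have hk0 : k ≠ 0 := div_ne_zero hz (hc t)
      refine ⟨h'.trans (((Homeomorph.addRight (-(F t z₁))).trans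
        (Homeomorph.mulRight₀ k hk0)).trans (Homeomorph.addLeft z₁)), ?_⟩
      funext z
      simp only [hh, Homeomorph.trans_apply, Homeomorph.coe_addRight,
        Homeomorph.coe_mulRight₀, Homeomorph.coe_addLeft, Homeomorph.homeomorph_mk_coe]
      rw [hk]
      simp [hh, sub_eq_add_neg]
    · funext z
      simp [hzero, div_self hz]
  · funext z
    simp [hfix₁, hfix₂]
    field_simp
    ring
  · intro t
    constructor
    · simp
    · show z₁ + (F t z₂ - F t z₁) * ((z₂ - z₁) / (F t z₂ - F t z₁)) = z₂
      rw [mul_comm, div_mul_cancel₀ _ (hc t), add_sub_cancel]
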